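/- Let k ≥ 2 and let u, v, w ∈ (Σ_k²)^* with |v| ≥ 1 and suppose [π₂(uv)]_k > [π₂(u)]_k (equivalently the pumped part contributes positively to the second coordinate) and [π₂(u v^i w)]_k > 0 for all i ≥ 0. Then the sequence quo_k(u v^i w) = [π₁(u v^i w)]_k/[π₂(u v^i w)]_k converges as i → ∞ to γ(u,v) := ([π₁(uv)]_k − [π₁(u)]_k)/([π₂(uv)]_k − [π₂(u)]_k), and the convergence is monotone (strictly increasing, constant, or strictly decreasing). -/

import Mathlib

/-- The base-k value of a word of digits, most significant digit first. -/
def baseVal (k : ℕ) (w : List (Fin k)) : ℕ :=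
  w.foldl (fun acc d => acc * k + d.val) 0

/-- The quotient of the base-k values of the two coordinates of a word over Σ_k². -/
noncomputable def quoVal (k : ℕ) (x : List (Fin k × Fin k)) : ℝ :=
  (baseVal k (x.map Prod.fst) : ℝ) / (baseVal k (x.map Prod.snd) : ℝ)

lemma baseVal_foldl (k a : ℕ) (x : List (Fin k)) :
    x.foldl (fun acc d => acc * k + d.val) a = a * k ^ x.length + baseVal k x := by
  induction x generalizing a with
  | nil => simp [baseVal]
  | cons d t ih =>
      simp only [List.foldl_cons, List.length_cons, baseVal]
      rw [ih, ih (0 * k + d.val)]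
      ring

lemma baseVal_append (k : ℕ) (x y : List (Fin k)) :
    baseVal k (x ++ y) = baseVal k x * k ^ y.length + baseVal k y := by
  show (x ++ y).foldl _ _ = _
  rw [List.foldl_append]
  exact baseVal_foldl k _ y

theorem pumped_word_quotient_tendsto_gamma (k : ℕ) (hk : 2 ≤ k)
    (u v w : List (Fin k × Fin k)) (hv : 1 ≤ v.length)
    (h2 : baseVal k (u.map Prod.snd) < baseVal k ((u ++ v).map Prod.snd))
    (hpos : ∀ i : ℕ, 0 < baseVal k ((u ++ (List.replicate i v).flatten ++ w).map Prod.snd)) :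
    Filter.Tendsto (fun i => quoVal k (u ++ (List.replicate i v).flatten ++ w))
      Filter.atTop
      (nhds (((baseVal k ((u ++ v).map Prod.fst) : ℝ) - (baseVal k (u.map Prod.fst) : ℝ)) /
        ((baseVal k ((u ++ v).map Prod.snd) : ℝ) - (baseVal k (u.map Prod.snd) : ℝ)))) ∧
    (StrictMono (fun i => quoVal k (u ++ (List.replicate i v).flatten ++ w)) ∨
     (∀ i j : ℕ, quoVal k (u ++ (List.replicate i v).flatten ++ w) =
        quoVal k (u ++ (List.replicate j v).flatten ++ w)) ∨
     StrictAnti (fun i => quoVal k (u ++ (List.replicate i v).flatten ++ w))) := by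
  -- cast append lemmas
  have hFapp : ∀ x y : List (Fin k × Fin k),
      (baseVal k ((x ++ y).map Prod.fst) : ℝ)
        = (baseVal k (x.map Prod.fst) : ℝ) * (k : ℝ) ^ y.length
          + (baseVal k (y.map Prod.fst) : ℝ) := by
    intro x y
    rw [List.map_append, baseVal_append]
    push_cast [List.length_map]
    ring
  have hGapp : ∀ x y : List (Fin k × Fin k),
      (baseVal k ((x ++ y).map Prod.snd) : ℝ)
        = (baseVal k (x.map Prod.snd) : ℝ) * (k : ℝ) ^ y.length
          + (baseVal k (y.map Prod.snd) : ℝ) := by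
    intro x y
    rw [List.map_append, baseVal_append]
    push_cast [List.length_map]
    ring
  set Kr : ℝ := (k : ℝ) ^ v.length with hKr
  set mr : ℝ := (k : ℝ) ^ w.length with hmr
  have hk1 : (1 : ℝ) < (k : ℝ) := by exact_mod_cast lt_of_lt_of_le one_lt_two (by exact_mod_cast hk)
  have hK1 : 1 < Kr := one_lt_pow₀ hk1 (by omega)
  have hKpos : 0 < Kr - 1 := by linarith
  have hm : 0 < mr := pow_pos (by linarith) _
  -- the sequences
  set N : ℕ → ℝ := fun i =>
    (baseVal k ((u ++ (List.replicate i v).flatten ++ w).map Prod.fst) : ℝ) with hNdef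
  set D : ℕ → ℝ := fun i =>
    (baseVal k ((u ++ (List.replicate i v).flatten ++ w).map Prod.snd) : ℝ) with hDdef
  have hq0 : ∀ i, quoVal k (u ++ (List.replicate i v).flatten ++ w) = N i / D i :=
    fun i => rfl
  have hDpos : ∀ i, 0 < D i := fun i => by
    have := hpos i
    simp only [hDdef]
    exact_mod_cast this
  have hword : ∀ i : ℕ, u ++ (List.replicate (i + 1) v).flatten ++ w
      = (u ++ (List.replicate i v).flatten) ++ (v ++ w) := by
    intro i
    simp [List.replicate_succ', List.append_assoc]
  set rn : ℝ := (baseVal k ((v ++ w).map Prod.fst) : ℝ)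
      - Kr * (baseVal k (w.map Prod.fst) : ℝ) with hrn
  set rd : ℝ := (baseVal k ((v ++ w).map Prod.snd) : ℝ)
      - Kr * (baseVal k (w.map Prod.snd) : ℝ) with hrd
  set Sn : ℝ := N 0 * (Kr - 1) + rn with hSn
  set Sd : ℝ := D 0 * (Kr - 1) + rd with hSd
  -- recurrences
  have recN : ∀ i, N (i + 1) = Kr * N i + rn := by
    intro i
    have h1 : N (i + 1)
        = (baseVal k ((u ++ (List.replicate i v).flatten).map Prod.fst) : ℝ) * (Kr * mr)
          + (baseVal k ((v ++ w).map Prod.fst) : ℝ) := by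
      show (baseVal k ((u ++ (List.replicate (i+1) v).flatten ++ w).map Prod.fst) : ℝ) = _
      rw [hword i, hFapp]
      rw [List.length_append, pow_add, hKr, hmr]
    have h3 : N i
        = (baseVal k ((u ++ (List.replicate i v).flatten).map Prod.fst) : ℝ) * mr
          + (baseVal k (w.map Prod.fst) : ℝ) := by
      show (baseVal k (((u ++ (List.replicate i v).flatten) ++ w).map Prod.fst) : ℝ) = _
      rw [hFapp, hmr]
    rw [hrn]
    linear_combination h1 - Kr * h3
  have recD : ∀ i, D (i + 1) = Kr * D i + rd := by
    intro i
    have h1 : D (i + 1)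
        = (baseVal k ((u ++ (List.replicate i v).flatten).map Prod.snd) : ℝ) * (Kr * mr)
          + (baseVal k ((v ++ w).map Prod.snd) : ℝ) := by
      show (baseVal k ((u ++ (List.replicate (i+1) v).flatten ++ w).map Prod.snd) : ℝ) = _
      rw [hword i, hGapp]
      rw [List.length_append, pow_add, hKr, hmr]
    have h3 : D i
        = (baseVal k ((u ++ (List.replicate i v).flatten).map Prod.snd) : ℝ) * mr
          + (baseVal k (w.map Prod.snd) : ℝ) := by
      show (baseVal k (((u ++ (List.replicate i v).flatten) ++ w).map Prod.snd) : ℝ) = _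
      rw [hGapp, hmr]
    rw [hrd]
    linear_combination h1 - Kr * h3
  -- closed forms
  have closedN : ∀ i, N i * (Kr - 1) = Sn * Kr ^ i - rn := by
    intro i
    induction i with
    | zero => rw [hSn]; ring
    | succ i ih => rw [recN i]; linear_combination Kr * ih
  have closedD : ∀ i, D i * (Kr - 1) = Sd * Kr ^ i - rd := by
    intro i
    induction i with
    | zero => rw [hSd]; ring
    | succ i ih => rw [recD i]; linear_combination Kr * ih
  -- Sn and Sd in terms of u, v
  have hN0 : N 0 = (baseVal k (u.map Prod.fst) : ℝ) * mr + (baseVal k (w.map Prod.fst) : ℝ) := by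
    have : N 0 = (baseVal k ((u ++ w).map Prod.fst) : ℝ) := by
      simp [hNdef]
    rw [this, hFapp, hmr]
  have hD0 : D 0 = (baseVal k (u.map Prod.snd) : ℝ) * mr + (baseVal k (w.map Prod.snd) : ℝ) := by
    have : D 0 = (baseVal k ((u ++ w).map Prod.snd) : ℝ) := by
      simp [hDdef]
    rw [this, hGapp, hmr]
  have hSn2 : Sn = mr * ((baseVal k ((u ++ v).map Prod.fst) : ℝ)
      - (baseVal k (u.map Prod.fst) : ℝ)) := by
    have huv : (baseVal k ((u ++ v).map Prod.fst) : ℝ)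
        = (baseVal k (u.map Prod.fst) : ℝ) * Kr + (baseVal k (v.map Prod.fst) : ℝ) := by
      rw [hFapp, hKr]
    have hvw : (baseVal k ((v ++ w).map Prod.fst) : ℝ)
        = (baseVal k (v.map Prod.fst) : ℝ) * mr + (baseVal k (w.map Prod.fst) : ℝ) := by
      rw [hFapp, hmr]
    rw [hSn, hrn, hN0]
    linear_combination hvw - mr * huv
  have hSd2 : Sd = mr * ((baseVal k ((u ++ v).map Prod.snd) : ℝ)
      - (baseVal k (u.map Prod.snd) : ℝ)) := by
    have huv : (baseVal k ((u ++ v).map Prod.snd) : ℝ)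
        = (baseVal k (u.map Prod.snd) : ℝ) * Kr + (baseVal k (v.map Prod.snd) : ℝ) := by
      rw [hGapp, hKr]
    have hvw : (baseVal k ((v ++ w).map Prod.snd) : ℝ)
        = (baseVal k (v.map Prod.snd) : ℝ) * mr + (baseVal k (w.map Prod.snd) : ℝ) := by
      rw [hGapp, hmr]
    rw [hSd, hrd, hD0]
    linear_combination hvw - mr * huv
  have hsub : (0 : ℝ) < (baseVal k ((u ++ v).map Prod.snd) : ℝ)
      - (baseVal k (u.map Prod.snd) : ℝ) := by
    have : (baseVal k (u.map Prod.snd) : ℝ) < (baseVal k ((u ++ v).map Prod.snd) : ℝ) := by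
      exact_mod_cast h2
    linarith
  have hSdpos : 0 < Sd := by rw [hSd2]; exact mul_pos hm hsub
  have hden : ∀ i, 0 < Sd * Kr ^ i - rd := by
    intro i
    rw [← closedD i]
    exact mul_pos (hDpos i) hKpos
  -- quotient closed form
  have hq : ∀ i, N i / D i = (Sn * Kr ^ i - rn) / (Sd * Kr ^ i - rd) := by
    intro i
    rw [← closedN i, ← closedD i]
    rw [mul_div_mul_right _ _ (ne_of_gt hKpos)]
  -- limit
  have hL : ((baseVal k ((u ++ v).map Prod.fst) : ℝ) - (baseVal k (u.map Prod.fst) : ℝ)) /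
      ((baseVal k ((u ++ v).map Prod.snd) : ℝ) - (baseVal k (u.map Prod.snd) : ℝ)) = Sn / Sd := by
    rw [hSn2, hSd2, mul_div_mul_left _ _ (ne_of_gt hm)]
  have hqlim : ∀ i, N i / D i = Sn / Sd + ((Sn * rd - Sd * rn) / Sd) * (Sd * Kr ^ i - rd)⁻¹ := by
    intro i
    rw [hq i]
    have h1 : Sd ≠ 0 := ne_of_gt hSdpos
    have h2 : Sd * Kr ^ i - rd ≠ 0 := ne_of_gt (hden i)
    rw [← div_eq_mul_inv, div_div, div_add_div _ _ h1 (mul_ne_zero h1 h2), div_eq_div_iff h2 (mul_ne_zero h1 (mul_ne_zero h1 h2))]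
    ring
  constructor
  · have htop : Filter.Tendsto (fun i : ℕ => Sd * Kr ^ i - rd) Filter.atTop Filter.atTop := by
      have h1 : Filter.Tendsto (fun i : ℕ => Kr ^ i) Filter.atTop Filter.atTop :=
        tendsto_pow_atTop_atTop_of_one_lt hK1
      have h2 : Filter.Tendsto (fun i : ℕ => Sd * Kr ^ i) Filter.atTop Filter.atTop :=
        h1.const_mul_atTop hSdpos
      simpa [sub_eq_add_neg] using Filter.tendsto_atTop_add_const_right Filter.atTop (-rd) h2
    have hinv : Filter.Tendsto (fun i : ℕ => (Sd * Kr ^ i - rd)⁻¹) Filter.atTop (nhds 0) :=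
      htop.inv_tendsto_atTop
    have hmain : Filter.Tendsto
        (fun i : ℕ => Sn / Sd + ((Sn * rd - Sd * rn) / Sd) * (Sd * Kr ^ i - rd)⁻¹)
        Filter.atTop (nhds (Sn / Sd + ((Sn * rd - Sd * rn) / Sd) * 0)) :=
      tendsto_const_nhds.add (hinv.const_mul _)
    rw [hL]
    have heq : (fun i : ℕ => quoVal k (u ++ (List.replicate i v).flatten ++ w))
        = fun i : ℕ => Sn / Sd + ((Sn * rd - Sd * rn) / Sd) * (Sd * Kr ^ i - rd)⁻¹ := by
      funext i
      rw [hq0 i, hqlim i]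
    rw [heq]
    simpa using hmain
  · -- monotonicity trichotomy
    have hdiff : ∀ i : ℕ, N (i + 1) / D (i + 1) - N i / D i
        = (rn * Sd - rd * Sn) * (Kr ^ i * (Kr - 1))
          / ((Sd * Kr ^ (i + 1) - rd) * (Sd * Kr ^ i - rd)) := by
      intro i
      rw [hq i, hq (i + 1)]
      have h1 : Sd * Kr ^ i - rd ≠ 0 := ne_of_gt (hden i)
      have h2 : Sd * Kr ^ (i + 1) - rd ≠ 0 := ne_of_gt (hden (i + 1))
      rw [div_sub_div _ _ h2 h1, div_eq_div_iff (mul_ne_zero h2 h1) (mul_ne_zero h2 h1)]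
      ring
    have hdenpos : ∀ i : ℕ, 0 < (Sd * Kr ^ (i + 1) - rd) * (Sd * Kr ^ i - rd) :=
      fun i => mul_pos (hden (i + 1)) (hden i)
    have hfac : ∀ i : ℕ, 0 < Kr ^ i * (Kr - 1) :=
      fun i => mul_pos (pow_pos (by linarith) i) hKpos
    rcases lt_trichotomy (rn * Sd - rd * Sn) 0 with hΔ | hΔ | hΔ
    · right; right
      apply strictAnti_nat_of_succ_lt
      intro i
      have := hdiff i
      have hneg : (rn * Sd - rd * Sn) * (Kr ^ i * (Kr - 1))
          / ((Sd * Kr ^ (i + 1) - rd) * (Sd * Kr ^ i - rd)) < 0 :=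
        div_neg_of_neg_of_pos (mul_neg_of_neg_of_pos hΔ (hfac i)) (hdenpos i)
      have : N (i + 1) / D (i + 1) - N i / D i < 0 := this ▸ hneg
      simp only [hq0]
      linarith
    · right; left
      have hconst : ∀ i : ℕ, N i / D i = N 0 / D 0 := by
        intro i
        induction i with
        | zero => rfl
        | succ i ih =>
            have := hdiff i
            rw [hΔ] at this
            simp at this
            linarith
      intro i j
      rw [hq0 i, hq0 j, hconst i, hconst j]
    · left
      apply strictMono_nat_of_lt_succ
      intro i
      have := hdiff i
      have hposd : 0 < (rn * Sd - rd * Sn) * (Kr ^ i * (Kr - 1))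
          / ((Sd * Kr ^ (i + 1) - rd) * (Sd * Kr ^ i - rd)) :=
        div_pos (mul_pos hΔ (hfac i)) (hdenpos i)
      have : 0 < N (i + 1) / D (i + 1) - N i / D i := this ▸ hposd
      simp only [hq0]
      linarith
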